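/- Let E be a directed graph. For each vertex v ∈ E⁰, the image α(Z(v)) is a closed subset of {0,1}^{E*} (with the product topology), where α(w)(y) = 1 iff w extends y. Consequently Z(v) is compact in the initial topology on E* ∪ E^∞ induced by α. -/

import Mathlib

structure DirectedGraph where
  V : Type
  E : Type
  r : E → V
  s : E → V

namespace DirectedGraph

variable {G : DirectedGraph}

/-- A finite path: a list of edges `μ₁ … μₙ` with `s μᵢ = r μᵢ₊₁`, together with its
range vertex (which is the range of the first edge when the path is nonempty, and is
the defining datum of the path when the path has length zero, i.e. is a vertex). -/
structure FinPath (G : DirectedGraph) where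
  vtx : G.V
  edges : List G.E
  chain : edges.Chain' fun e f => G.s e = G.r f
  hv : ∀ e ∈ edges.head?, G.r e = vtx

/-- An infinite path `μ₁μ₂…` with `s μᵢ = r μᵢ₊₁`. -/
structure InfPath (G : DirectedGraph) where
  edge : ℕ → G.E
  chain : ∀ n, G.s (edge n) = G.r (edge (n + 1))

/-- The path space `E* ∪ E^∞`. -/
abbrev PathSpace (G : DirectedGraph) := FinPath G ⊕ InfPath G

namespace FinPath

def length (μ : FinPath G) : ℕ := μ.edges.length

def range (μ : FinPath G) : G.V := μ.vtx

def source (μ : FinPath G) : G.V := (μ.edges.getLast?).elim μ.vtx G.s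

/-- A vertex, regarded as a path of length zero. -/
def ofVertex (G : DirectedGraph) (v : G.V) : FinPath G :=
  ⟨v, [], List.isChain_nil, by simp⟩

/-- `μ.Extends ν` means `μ = νν′` for some path `ν′`. -/
def Extends (μ ν : FinPath G) : Prop := μ.vtx = ν.vtx ∧ ν.edges <+: μ.edges

end FinPath

def InfPath.range (x : InfPath G) : G.V := G.r (x.edge 0)

/-- `x.Extends ν` means the infinite path `x` is of the form `νx′`. -/
def InfPath.Extends (x : InfPath G) (ν : FinPath G) : Prop :=
  (ν.edges = [] → x.range = ν.vtx) ∧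
  ∀ i, (h : i < ν.edges.length) → x.edge i = ν.edges.get ⟨i, h⟩

/-- The cylinder set `Z(μ) = {w ∈ E* ∪ E^∞ : w = μw′}`. -/
def Cyl (μ : FinPath G) : Set (PathSpace G) :=
  {w | match w with
       | Sum.inl lam => lam.Extends μ
       | Sum.inr x => x.Extends μ}

/-- The cylinder set `Z(μe)` of the path `μ` followed by the edge `e`. -/
def CylSnoc (μ : FinPath G) (e : G.E) : Set (PathSpace G) :=
  {w | match w with
       | Sum.inl lam => (μ.edges ++ [e]) <+: lam.edges
       | Sum.inr x => ∀ i, (h : i < (μ.edges ++ [e]).length) →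
           x.edge i = (μ.edges ++ [e]).get ⟨i, h⟩}

/-- `Z(μ∖G) := Z(μ) ∖ ⋃_{e ∈ G} Z(μe)`. -/
def CylMinus (μ : FinPath G) (GS : Finset G.E) : Set (PathSpace G) :=
  Cyl μ \ ⋃ e ∈ GS, CylSnoc μ e

/-- The basic sets `Z(μ∖G)` for `μ ∈ E*` and `G ⊆ s(μ)E¹` finite. -/
def basicSets (G : DirectedGraph) : Set (Set (PathSpace G)) :=
  {S | ∃ (μ : FinPath G) (GS : Finset G.E),
        (∀ e ∈ GS, G.r e = μ.source) ∧ S = CylMinus μ GS}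

end DirectedGraph


namespace DirectedGraph

/-- The map w ↦ (indicator of {y : w ∈ Z(y)}) from the path space to {0,1}^{E*}. -/
noncomputable def alphaMap (G : DirectedGraph) : PathSpace G → (FinPath G → Bool) :=
  fun w mu => @decide (w ∈ Cyl mu) (Classical.propDecidable _)

variable {G : DirectedGraph}

-- auxiliary lemmas

theorem FinPath.ext' {μ ν : FinPath G} (h1 : μ.vtx = ν.vtx) (h2 : μ.edges = ν.edges) :
    μ = ν := by
  cases μ; cases ν; simp_all

theorem FinPath.Extends.refl (μ : FinPath G) : μ.Extends μ := ⟨rfl, List.prefix_refl _⟩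

theorem FinPath.r_get_zero (μ : FinPath G) (h : 0 < μ.edges.length) :
    G.r (μ.edges.get ⟨0, h⟩) = μ.vtx := by
  obtain ⟨vtx, edges, chain, hv⟩ := μ
  cases edges with
  | nil => simp at h
  | cons e l =>
    simp only [List.get_eq_getElem, List.getElem_cons_zero]
    exact hv e rfl

theorem InfPath.Extends.range_eq {x : InfPath G} {μ : FinPath G} (h : x.Extends μ) :
    x.range = μ.vtx := by
  rcases hμ : μ.edges.length with _ | n
  · exact h.1 (List.length_eq_zero_iff.mp hμ)
  · have h0 := h.2 0 (by omega)
    rw [InfPath.range, h0, FinPath.r_get_zero]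

theorem inr_mem_cyl_prefix {x : InfPath G} {μ ν : FinPath G} (h : x.Extends μ)
    (h2 : ν.edges <+: μ.edges) (h3 : ν.vtx = μ.vtx) : x.Extends ν := by
  refine ⟨fun _ => h.range_eq.trans h3.symm, fun i hi => ?_⟩
  have e1 := h.2 i (lt_of_lt_of_le hi h2.length_le)
  simp only [List.get_eq_getElem] at e1 ⊢
  rw [e1, h2.getElem hi]

theorem mem_cyl_prefix {w : PathSpace G} {μ ν : FinPath G} (h : w ∈ Cyl μ)
    (h2 : ν.edges <+: μ.edges) (h3 : ν.vtx = μ.vtx) : w ∈ Cyl ν := by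
  match w with
  | Sum.inl lam => exact ⟨h.1.trans h3.symm, h2.trans h.2⟩
  | Sum.inr x => exact inr_mem_cyl_prefix h h2 h3

theorem mem_cyl_extends {w : PathSpace G} {μ ν : FinPath G} (h : w ∈ Cyl μ)
    (h2 : μ.Extends ν) : w ∈ Cyl ν := mem_cyl_prefix h h2.2 h2.1.symm

theorem inr_extends_of_le {x : InfPath G} {μ ν : FinPath G} (h1 : x.Extends μ)
    (h2 : x.Extends ν) (hle : ν.edges.length ≤ μ.edges.length) :
    ν.edges <+: μ.edges := by
  rw [List.prefix_iff_eq_take]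
  apply List.ext_getElem (by simp [Nat.min_eq_left hle])
  intro i hi hi2
  have e1 := h1.2 i (hi.trans_le hle)
  have e2 := h2.2 i hi
  simp only [List.get_eq_getElem] at e1 e2
  rw [List.getElem_take, ← e1, ← e2]

theorem mem_cyl_compare {w : PathSpace G} {μ ν : FinPath G} (h1 : w ∈ Cyl μ)
    (h2 : w ∈ Cyl ν) : μ.Extends ν ∨ ν.Extends μ := by
  match w with
  | Sum.inl lam =>
    have hv : μ.vtx = ν.vtx := h1.1.symm.trans h2.1
    rcases List.prefix_or_prefix_of_prefix h2.2 h1.2 with h | h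
    · exact Or.inl ⟨hv, h⟩
    · exact Or.inr ⟨hv.symm, h⟩
  | Sum.inr x =>
    have hv : μ.vtx = ν.vtx :=
      (InfPath.Extends.range_eq h1).symm.trans (InfPath.Extends.range_eq h2)
    rcases le_total ν.edges.length μ.edges.length with h | h
    · exact Or.inl ⟨hv, inr_extends_of_le h1 h2 h⟩
    · exact Or.inr ⟨hv.symm, inr_extends_of_le h2 h1 h⟩

def FinPath.trunc (μ : FinPath G) (k : ℕ) : FinPath G :=
  ⟨μ.vtx, μ.edges.take k, μ.chain.prefix (List.take_prefix k _), by
    intro e he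
    apply μ.hv
    rcases hμ : μ.edges with _ | ⟨a, l⟩
    · rw [hμ] at he; simp at he
    · rcases k with _ | k
      · simp at he
      · rw [hμ] at he; simp at he; simp [hμ, he]⟩

theorem FinPath.extends_trunc (μ : FinPath G) (k : ℕ) : μ.Extends (μ.trunc k) :=
  ⟨rfl, List.take_prefix k _⟩

theorem FinPath.trunc_length (μ : FinPath G) {k : ℕ} (hk : k ≤ μ.edges.length) :
    (μ.trunc k).edges.length = k := by simp [FinPath.trunc, Nat.min_eq_left hk]

theorem alpha_eq_true {w : PathSpace G} {μ : FinPath G} :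
    alphaMap G w μ = true ↔ w ∈ Cyl μ := by
  simp [alphaMap]

/-- The candidate closed set. -/
def goodSet (G : DirectedGraph) (v : G.V) : Set (FinPath G → Bool) :=
  {f | f (FinPath.ofVertex G v) = true ∧
    (∀ μ ν : FinPath G, f μ = true → μ.Extends ν → f ν = true) ∧
    (∀ μ ν : FinPath G, f μ = true → f ν = true → μ.Extends ν ∨ ν.Extends μ)}

theorem vtx_eq_of_compare {f : FinPath G → Bool} {v : G.V}
    (hf : f ∈ goodSet G v) {μ : FinPath G} (hμ : f μ = true) : μ.vtx = v := by
  rcases hf.2.2 μ (FinPath.ofVertex G v) hμ hf.1 with h | h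
  · exact h.1
  · exact h.1.symm

theorem image_alpha_eq (G : DirectedGraph) (v : G.V) :
    alphaMap G '' Cyl (FinPath.ofVertex G v) = goodSet G v := by
  ext f
  constructor
  · rintro ⟨w, hw, rfl⟩
    refine ⟨alpha_eq_true.mpr hw, fun μ ν hμ hext => ?_, fun μ ν hμ hν => ?_⟩
    · exact alpha_eq_true.mpr (mem_cyl_extends (alpha_eq_true.mp hμ) hext)
    · exact mem_cyl_compare (alpha_eq_true.mp hμ) (alpha_eq_true.mp hν)
  · intro hf
    obtain ⟨h0, h2, h3⟩ := hf
    by_cases hb : ∃ lam : FinPath G, f lam = true ∧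
        ∀ μ : FinPath G, f μ = true → μ.edges.length ≤ lam.edges.length
    · -- finite case
      obtain ⟨lam, hlam, hmax⟩ := hb
      refine ⟨Sum.inl lam, ⟨vtx_eq_of_compare ⟨h0, h2, h3⟩ hlam, List.nil_prefix⟩, ?_⟩
      funext μ
      rw [Bool.eq_iff_iff, alpha_eq_true]
      constructor
      · intro h
        exact h2 lam μ hlam h
      · intro hμ
        rcases h3 lam μ hlam hμ with h | h
        · exact h
        · have hlen : μ.edges.length = lam.edges.length :=
            le_antisymm (hmax μ hμ) h.2.length_le
          have : lam = μ := FinPath.ext' h.1.symm (h.2.eq_of_length hlen.symm)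
          rw [this]; exact FinPath.Extends.refl μ
    · -- infinite case
      push_neg at hb
      have hlen : ∀ n : ℕ, ∃ μ : FinPath G, f μ = true ∧ μ.edges.length = n := by
        have step : ∀ n : ℕ, ∃ μ : FinPath G, f μ = true ∧ n ≤ μ.edges.length := by
          intro n
          induction n with
          | zero => exact ⟨FinPath.ofVertex G v, h0, Nat.zero_le _⟩
          | succ n ih =>
            obtain ⟨μ, hμ, hn⟩ := ih
            obtain ⟨ν, hν, hlt⟩ := hb μ hμ
            exact ⟨ν, hν, by omega⟩
        intro n
        obtain ⟨μ, hμ, hn⟩ := step n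
        exact ⟨μ.trunc n, h2 μ _ hμ (μ.extends_trunc n), μ.trunc_length hn⟩
      set p : ℕ → FinPath G := fun n => (hlen n).choose with hp
      have hp1 : ∀ n, f (p n) = true := fun n => (hlen n).choose_spec.1
      have hp2 : ∀ n, (p n).edges.length = n := fun n => (hlen n).choose_spec.2
      have hpv : ∀ n, (p n).vtx = v := fun n => vtx_eq_of_compare ⟨h0, h2, h3⟩ (hp1 n)
      have hpre : ∀ m n : ℕ, m ≤ n → (p m).edges <+: (p n).edges := by
        intro m n hmn
        rcases h3 (p n) (p m) (hp1 n) (hp1 m) with h | h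
        · exact h.2
        · have : n ≤ m := by rw [← hp2 n, ← hp2 m]; exact h.2.length_le
          have : m = n := le_antisymm hmn this
          subst this
          exact List.prefix_refl _
      have huniq : ∀ μ : FinPath G, f μ = true → μ = p μ.edges.length := by
        intro μ hμ
        have hl : (p μ.edges.length).edges.length = μ.edges.length := hp2 _
        rcases h3 μ (p μ.edges.length) hμ (hp1 _) with h | h
        · exact FinPath.ext' h.1 (h.2.eq_of_length hl).symm
        · exact FinPath.ext' h.1.symm ((h.2.eq_of_length hl.symm))
      have hidx : ∀ n, n < (p (n + 1)).edges.length := fun n => by rw [hp2]; omega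
      have hchain : ∀ n, G.s ((p (n+1)).edges.get ⟨n, hidx n⟩)
          = G.r ((p (n+2)).edges.get ⟨n+1, by rw [hp2]; omega⟩) := by
        intro n
        have hc := (p (n+2)).chain
        replace hc := List.isChain_iff_getElem.mp hc
        have := hc n (by rw [hp2]; omega)
        have he : (p (n+1)).edges.get ⟨n, hidx n⟩
            = (p (n+2)).edges.get ⟨n, by rw [hp2]; omega⟩ := by
          simp only [List.get_eq_getElem]
          exact (hpre (n+1) (n+2) (by omega)).getElem (hidx n)
        rw [he]
        exact this
      set x : InfPath G := ⟨fun n => (p (n+1)).edges.get ⟨n, hidx n⟩, hchain⟩ with hx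
      have hxe : ∀ n, x.Extends (p n) := by
        intro n
        constructor
        · intro hnil
          have : x.range = (p 1).vtx := by
            rw [InfPath.range]
            show G.r ((p 1).edges.get ⟨0, hidx 0⟩) = _
            exact (p 1).r_get_zero (hidx 0)
          rw [this, hpv 1, hpv n]
        · intro i hi
          show (p (i+1)).edges.get ⟨i, hidx i⟩ = _
          simp only [List.get_eq_getElem]
          exact (hpre (i+1) n (by rw [hp2] at hi; omega)).getElem (hidx i)
      have hxr : x.range = v := by
        have := (hxe 0).range_eq
        rw [this, hpv 0]
      refine ⟨Sum.inr x, ⟨fun _ => hxr, fun i hi => by simp [FinPath.ofVertex] at hi⟩, ?_⟩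
      funext μ
      rw [Bool.eq_iff_iff, alpha_eq_true]
      constructor
      · intro h
        have hμp : μ = p μ.edges.length := by
          apply FinPath.ext'
          · rw [← InfPath.Extends.range_eq h, (hxe μ.edges.length).range_eq]
          · apply List.ext_getElem (by rw [hp2])
            intro i hi1 hi2
            have e1 := h.2 i hi1
            have e2 := (hxe μ.edges.length).2 i (by rw [hp2]; exact hi1)
            simp only [List.get_eq_getElem] at e1 e2
            rw [← e1, ← e2]
        rw [hμp]
        exact hp1 _
      · intro hμ
        rw [huniq μ hμ]
        exact hxe _

theorem goodSet_isClosed (G : DirectedGraph) (v : G.V) : IsClosed (goodSet G v) := by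
  have heq : goodSet G v =
      ((fun f : FinPath G → Bool => f (FinPath.ofVertex G v)) ⁻¹' {true}) ∩
      ((⋂ (μ : FinPath G) (ν : FinPath G),
        (fun f : FinPath G → Bool => (f μ, f ν)) ⁻¹'
          {q : Bool × Bool | q.1 = true → μ.Extends ν → q.2 = true}) ∩
       (⋂ (μ : FinPath G) (ν : FinPath G),
        (fun f : FinPath G → Bool => (f μ, f ν)) ⁻¹'
          {q : Bool × Bool | q.1 = true → q.2 = true → μ.Extends ν ∨ ν.Extends μ})) := by
    ext f
    simp only [goodSet, Set.mem_inter_iff, Set.mem_iInter, Set.mem_preimage,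
      Set.mem_setOf_eq, Set.mem_singleton_iff]
  rw [heq]
  refine IsClosed.inter ?_ (IsClosed.inter ?_ ?_)
  · exact (isClosed_discrete _).preimage (continuous_apply _)
  · exact isClosed_iInter fun μ => isClosed_iInter fun ν =>
      (isClosed_discrete _).preimage ((continuous_apply μ).prodMk (continuous_apply ν))
  · exact isClosed_iInter fun μ => isClosed_iInter fun ν =>
      (isClosed_discrete _).preimage ((continuous_apply μ).prodMk (continuous_apply ν))



end DirectedGraph

open DirectedGraph in
/-- alpha(Z(v)) is closed in the product space {0,1}^{E*}, and consequently
Z(v) is compact in the initial topology induced by alpha. -/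
theorem alphaMap_image_cyl_vertex_closed (G : DirectedGraph) (v : G.V) :
    IsClosed (alphaMap G '' Cyl (FinPath.ofVertex G v)) ∧
    @IsCompact (PathSpace G) (TopologicalSpace.induced (alphaMap G) inferInstance)
      (Cyl (FinPath.ofVertex G v)) := by
  have hclosed : IsClosed (alphaMap G '' Cyl (FinPath.ofVertex G v)) := by
    rw [image_alpha_eq]; exact goodSet_isClosed G v
  refine ⟨hclosed, ?_⟩
  have hcomp : IsCompact (alphaMap G '' Cyl (FinPath.ofVertex G v)) :=
    hclosed.isCompact
  letI : TopologicalSpace (PathSpace G) :=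
    TopologicalSpace.induced (alphaMap G) inferInstance
  have hind : Topology.IsInducing (alphaMap G) := ⟨rfl⟩
  exact hind.isCompact_iff.mpr hcomp
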